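/- If λ ∈ ℂ and φ ∈ L²(I;ℂ) with φ ≠ 0 (as an equivalence class) satisfy ℒφ = λφ, then either λ = −b₁, or there exists a positive integer ℓ such that λ = χ₁(κ;ℓ,q)cosσ − b₁ − i·χ₂(κ;ℓ,q)sinσ or λ = χ₁(κ;ℓ,q)cosσ − b₁ + i·χ₂(κ;ℓ,q)sinσ. In other words, the eigenvalues of ℒ are exactly those listed. -/

import Mathlib

open MeasureTheory Real Set Filter
open scoped ENNReal

noncomputable section

/-- Lebesgue measure restricted to the unit interval `I = [0,1]`. -/
def muI : Measure ℝ := volume.restrict (Set.Icc (0:ℝ) 1)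

/-- The nearest-neighbor graphon `W(x,y) = 1` if `|x-y| ≤ κ` or `|x-y| ≥ 1-κ`, else `0`. -/
def Wnn (κ : ℝ) (x y : ℝ) : ℝ := if |x - y| ≤ κ ∨ |x - y| ≥ 1 - κ then 1 else 0

/-- The linearization operator `ℒ` on `L²(I; ℂ)`, given pointwise:
`(ℒφ)(x) = ∫_I W(x,y) cos(2πq(y−x)+σ)(φ(y)−φ(x)) dy − b₁ φ(x)`. -/
def Lop (κ : ℝ) (q : ℕ) (σ b₁ : ℝ) (φ : ℝ → ℂ) (x : ℝ) : ℂ :=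
  (∫ y in Set.Icc (0:ℝ) 1,
      (Wnn κ x y : ℂ) * (Real.cos (2 * π * q * (y - x) + σ) : ℂ) * (φ y - φ x))
    - (b₁ : ℂ) * φ x

/-- The quantity `χ₁(κ; ℓ, q)`. -/
def chi1 (κ : ℝ) (l q : ℕ) : ℝ :=
  if l = q then
    κ + Real.sin (4 * π * q * κ) / (4 * π * q) - Real.sin (2 * π * q * κ) / (π * q)
  else
    Real.sin (2 * π * ((l:ℝ) - q) * κ) / (2 * π * ((l:ℝ) - q))
      + Real.sin (2 * π * ((l:ℝ) + q) * κ) / (2 * π * ((l:ℝ) + q))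
      - Real.sin (2 * π * q * κ) / (π * q)

/-- The quantity `χ₂(κ; ℓ, q)`. -/
def chi2 (κ : ℝ) (l q : ℕ) : ℝ :=
  if l = q then
    κ - Real.sin (4 * π * q * κ) / (4 * π * q)
  else
    Real.sin (2 * π * ((l:ℝ) - q) * κ) / (2 * π * ((l:ℝ) - q))
      - Real.sin (2 * π * ((l:ℝ) + q) * κ) / (2 * π * ((l:ℝ) + q))







namespace NNaux

/-- complex exponential `e^{2πi n x}` -/
def El (n : ℤ) (x : ℝ) : ℂ := Complex.exp (2 * π * Complex.I * n * x)

lemma El_eq (n : ℤ) (x : ℝ) : El n x = Complex.exp ((2 * π * n * x : ℝ) * Complex.I) := by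
  unfold El; congr 1; push_cast; ring

lemma El_norm (n : ℤ) (x : ℝ) : ‖El n x‖ = 1 := by
  rw [El_eq]; exact Complex.norm_exp_ofReal_mul_I _

lemma El_continuous (n : ℤ) : Continuous (El n) := by
  unfold El
  exact Complex.continuous_exp.comp (by continuity)

lemma El_zero (x : ℝ) : El 0 x = 1 := by simp [El]

lemma El_mul_El (n m : ℤ) (x : ℝ) : El n x * El m x = El (n + m) x := by
  unfold El; rw [← Complex.exp_add]; congr 1; push_cast; ring

lemma El_sub (n : ℤ) (y t : ℝ) : El n (y - t) = El n y * El (-n) t := by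
  unfold El; rw [← Complex.exp_add]; congr 1; push_cast; ring

lemma El_period (n : ℤ) (t : ℝ) : El n (t + 1) = El n t := by
  unfold El
  rw [show (2 * (π:ℂ) * Complex.I * (n:ℂ) * ((t:ℝ)+1 : ℝ))
      = 2 * π * Complex.I * n * t + n * (2 * π * Complex.I) by push_cast; ring,
    Complex.exp_add, Complex.exp_int_mul_two_pi_mul_I, mul_one]

/-- `∫_{-κ}^{κ} e^{2πimt} dt` -/
def cS (κ : ℝ) (m : ℤ) : ℝ := if m = 0 then 2*κ else Real.sin (2*π*m*κ) / (π*m)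

lemma cS_neg (κ : ℝ) (m : ℤ) : cS κ (-m) = cS κ m := by
  unfold cS
  rcases eq_or_ne m 0 with h | h
  · simp [h]
  · rw [if_neg (by simpa using h), if_neg h,
      show (2*π*((-m : ℤ):ℝ)*κ) = -(2*π*(m:ℝ)*κ) by push_cast; ring, Real.sin_neg]
    push_cast
    rw [mul_neg, neg_div_neg_eq]

lemma integral_El (κ : ℝ) (m : ℤ) :
    ∫ t in (-κ)..κ, El m t = ((cS κ m : ℝ) : ℂ) := by
  rcases eq_or_ne m 0 with h | h
  · subst h
    simp [El_zero, cS, two_mul]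
  · have hm : ((m : ℂ)) ≠ 0 := by exact_mod_cast h
    have hπ : ((π : ℂ)) ≠ 0 := by exact_mod_cast Real.pi_ne_zero
    have hc : (2 * (π:ℂ) * Complex.I * m) ≠ 0 := by
      simp [Complex.I_ne_zero, hm, hπ]
    have h1 : ∀ x : ℝ, El m x = Complex.exp ((2 * (π:ℂ) * Complex.I * m) * x) := by
      intro x; unfold El; ring_nf
    simp_rw [h1]
    rw [integral_exp_mul_complex hc]
    have e1 : (2 * (π:ℂ) * Complex.I * m) * (κ:ℂ) = ((2*π*m*κ : ℝ) : ℂ) * Complex.I := by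
      push_cast; ring
    have e2 : (2 * (π:ℂ) * Complex.I * m) * ((-κ : ℝ):ℂ) = ((-(2*π*m*κ) : ℝ) : ℂ) * Complex.I := by
      push_cast; ring
    rw [e1, e2, Complex.exp_mul_I, Complex.exp_mul_I]
    rw [cS, if_neg h]
    push_cast
    rw [Complex.cos_neg, Complex.sin_neg]
    have hI : Complex.I ≠ 0 := Complex.I_ne_zero
    field_simp
    ring

lemma cos_to_exp (θ : ℝ) :
    ((Real.cos θ : ℝ) : ℂ) = (Complex.exp (θ * Complex.I) + Complex.exp (-θ * Complex.I)) / 2 := by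
  rw [Complex.exp_mul_I, show (-θ : ℂ) * Complex.I = (-θ : ℂ) * Complex.I by rfl,
    Complex.exp_mul_I]
  push_cast
  rw [Complex.cos_neg, Complex.sin_neg]
  ring

end NNaux

section part2
open NNaux
variable (κ : ℝ) (q : ℕ) (σ : ℝ)

namespace NNaux

/-- `e^{iσ}` expansion coefficient -/
def cC (κ : ℝ) (q : ℕ) (σ : ℝ) (n : ℤ) : ℂ :=
  (Complex.exp (σ * Complex.I) * ((cS κ (n + q) : ℝ) : ℂ)
    + Complex.exp (-σ * Complex.I) * ((cS κ (n - q) : ℝ) : ℂ)) / 2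

lemma g_expand (n : ℤ) (t : ℝ) :
    ((Real.cos (2*π*q*t + σ) : ℝ) : ℂ) * El n t
      = (Complex.exp (σ * Complex.I) * El (n + q) t
          + Complex.exp (-σ * Complex.I) * El (n - q) t) / 2 := by
  have e1 : Complex.exp (((2*π*q*t + σ : ℝ) : ℂ) * Complex.I) * El n t
      = Complex.exp ((σ:ℂ) * Complex.I) * El (n + q) t := by
    unfold El
    rw [← Complex.exp_add, ← Complex.exp_add]
    congr 1
    push_cast; ring
  have e2 : Complex.exp (-((2*π*q*t + σ : ℝ) : ℂ) * Complex.I) * El n t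
      = Complex.exp (-(σ:ℂ) * Complex.I) * El (n - q) t := by
    unfold El
    rw [← Complex.exp_add, ← Complex.exp_add]
    congr 1
    push_cast; ring
  rw [cos_to_exp]
  rw [div_mul_eq_mul_div, add_mul, e1, e2]

lemma integral_cosE (n : ℤ) :
    ∫ t in (-κ)..κ, ((Real.cos (2*π*q*t + σ) : ℝ) : ℂ) * El n t = cC κ q σ n := by
  simp_rw [g_expand]
  rw [intervalIntegral.integral_div]
  rw [intervalIntegral.integral_add
      (by exact (continuous_const.mul (El_continuous (n+q))).intervalIntegrable _ _ :
        IntervalIntegrable (fun x => Complex.exp (σ * Complex.I) * El (n + q) x) volume (-κ) κ)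
      (by exact (continuous_const.mul (El_continuous (n-q))).intervalIntegrable _ _ :
        IntervalIntegrable (fun x => Complex.exp (-σ * Complex.I) * El (n - q) x) volume (-κ) κ)]
  rw [intervalIntegral.integral_const_mul, intervalIntegral.integral_const_mul,
    integral_El, integral_El, cC]

/-- the periodized kernel integrand -/
def FK (κ : ℝ) (q : ℕ) (σ : ℝ) (n : ℤ) (t : ℝ) : ℂ :=
  (if |t| ≤ κ ∨ 1 - κ ≤ |t| then (1:ℂ) else 0) * (((Real.cos (2*π*q*t + σ) : ℝ) : ℂ) * El n t)

lemma FK_measurable (n : ℤ) : Measurable (FK κ q σ n) := by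
  unfold FK
  apply Measurable.mul
  · apply Measurable.ite _ measurable_const measurable_const
    exact ((measurableSet_le continuous_abs.measurable measurable_const).union
      (measurableSet_le measurable_const continuous_abs.measurable))
  · apply Measurable.mul
    · exact Complex.measurable_ofReal.comp (Real.continuous_cos.measurable.comp (by fun_prop))
    · exact (El_continuous n).measurable

lemma FK_norm_le (n : ℤ) (t : ℝ) : ‖FK κ q σ n t‖ ≤ 1 := by
  unfold FK
  rw [norm_mul, norm_mul, El_norm, mul_one]
  have h1 : ‖(if |t| ≤ κ ∨ 1 - κ ≤ |t| then (1:ℂ) else 0)‖ ≤ 1 := by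
    split <;> simp
  have h2 : ‖((Real.cos (2*π*q*t + σ) : ℝ) : ℂ)‖ ≤ 1 := by
    rw [Complex.norm_real, Real.norm_eq_abs]
    exact Real.abs_cos_le_one _
  calc ‖(if |t| ≤ κ ∨ 1 - κ ≤ |t| then (1:ℂ) else 0)‖ * ‖((Real.cos (2*π*q*t + σ) : ℝ) : ℂ)‖
      ≤ 1 * 1 := mul_le_mul h1 h2 (norm_nonneg _) zero_le_one
    _ = 1 := by norm_num

lemma FK_intervalIntegrable (n : ℤ) (a b : ℝ) :
    IntervalIntegrable (FK κ q σ n) volume a b := by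
  rw [intervalIntegrable_iff]
  refine Integrable.mono' (g := fun _ => (1:ℝ))
    (integrableOn_const measure_Ioc_lt_top.ne)
    ((FK_measurable κ q σ n).aestronglyMeasurable) ?_
  exact Eventually.of_forall fun t => FK_norm_le κ q σ n t

lemma FK_period (n : ℤ) {t : ℝ} (ht : t ∈ Set.Icc (-1:ℝ) 0) :
    FK κ q σ n (t + 1) = FK κ q σ n t := by
  obtain ⟨h1, h2⟩ := ht
  have habs1 : |t + 1| = t + 1 := abs_of_nonneg (by linarith)
  have habs2 : |t| = -t := abs_of_nonpos h2
  unfold FK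
  have hcond : (|t + 1| ≤ κ ∨ 1 - κ ≤ |t + 1|) ↔ (|t| ≤ κ ∨ 1 - κ ≤ |t|) := by
    rw [habs1, habs2]
    constructor
    · rintro (h | h)
      · right; linarith
      · left; linarith
    · rintro (h | h)
      · right; linarith
      · left; linarith
  have hcos : Real.cos (2*π*q*(t+1) + σ) = Real.cos (2*π*q*t + σ) := by
    rw [show (2*π*q*(t+1) + σ) = (2*π*q*t + σ) + (q : ℤ) * (2*π) by push_cast; ring]
    exact Real.cos_add_int_mul_two_pi _ _
  rw [hcos, El_period, if_congr hcond rfl rfl]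

lemma integral_FK_shift (n : ℤ) {a : ℝ} (ha : a ∈ Set.Icc (0:ℝ) 1) :
    ∫ t in (a-1)..a, FK κ q σ n t = ∫ t in (0:ℝ)..1, FK κ q σ n t := by
  obtain ⟨ha0, ha1⟩ := ha
  have key : ∫ t in (a-1)..(0:ℝ), FK κ q σ n t = ∫ t in a..(1:ℝ), FK κ q σ n t := by
    have h1 : ∫ t in a..(1:ℝ), FK κ q σ n (t - 1)
        = ∫ t in (a-1)..(0:ℝ), FK κ q σ n t := by
      simpa using intervalIntegral.integral_comp_sub_right (a := a) (b := 1)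
        (fun t => FK κ q σ n t) 1
    rw [← h1]
    apply intervalIntegral.integral_congr
    intro t ht
    rw [Set.uIcc_of_le (by linarith : a ≤ 1)] at ht
    obtain ⟨ht1, ht2⟩ := ht
    have := FK_period κ q σ n (t := t - 1) ⟨by linarith, by linarith⟩
    rw [sub_add_cancel] at this
    exact this.symm
  have h2 := intervalIntegral.integral_add_adjacent_intervals
    (FK_intervalIntegrable κ q σ n (a-1) 0) (FK_intervalIntegrable κ q σ n 0 a)
  have h3 := intervalIntegral.integral_add_adjacent_intervals
    (FK_intervalIntegrable κ q σ n 0 a) (FK_intervalIntegrable κ q σ n a 1)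
  rw [← h2, key]
  rw [← h3]
  ring

lemma integral_FK (n : ℤ) (hκ0 : 0 < κ) (hκ2 : κ ≤ 1/2) :
    ∫ t in (0:ℝ)..1, FK κ q σ n t = cC κ q σ n := by
  have hk1 : κ ≤ 1 - κ := by linarith
  have h01 := intervalIntegral.integral_add_adjacent_intervals
    (FK_intervalIntegrable κ q σ n 0 κ) (FK_intervalIntegrable κ q σ n κ 1)
  have h02 := intervalIntegral.integral_add_adjacent_intervals
    (FK_intervalIntegrable κ q σ n κ (1-κ)) (FK_intervalIntegrable κ q σ n (1-κ) 1)
  -- first piece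
  have p1 : ∫ t in (0:ℝ)..κ, FK κ q σ n t
      = ∫ t in (0:ℝ)..κ, ((Real.cos (2*π*q*t + σ) : ℝ) : ℂ) * El n t := by
    apply intervalIntegral.integral_congr
    intro t ht
    rw [Set.uIcc_of_le hκ0.le] at ht
    unfold FK
    rw [if_pos (Or.inl (by rw [abs_of_nonneg ht.1]; exact ht.2)), one_mul]
  -- middle piece is zero
  have p2 : ∫ t in κ..(1-κ), FK κ q σ n t = 0 := by
    rw [← intervalIntegral.integral_zero (a := κ) (b := (1-κ)) (μ := volume)]
    apply intervalIntegral.integral_congr_ae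
    have hne : ∀ᵐ t : ℝ, t ≠ 1 - κ := by
      refine (Set.Countable.ae_notMem (Set.countable_singleton (1-κ)) _).mono ?_
      intro t ht; simpa using ht
    filter_upwards [hne] with t ht htmem
    rw [Set.uIoc_of_le hk1] at htmem
    obtain ⟨ht1, ht2⟩ := htmem
    have ht2' : t < 1 - κ := lt_of_le_of_ne ht2 ht
    have htpos : 0 < t := lt_trans hκ0 ht1
    unfold FK
    rw [if_neg, zero_mul]
    rw [abs_of_pos htpos]
    push_neg
    constructor <;> linarith
  -- last piece
  have p3 : ∫ t in (1-κ)..1, FK κ q σ n t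
      = ∫ t in (-κ)..(0:ℝ), ((Real.cos (2*π*q*t + σ) : ℝ) : ℂ) * El n t := by
    have hshift : ∫ t in (-κ)..(0:ℝ), FK κ q σ n (t + 1)
        = ∫ t in (1-κ)..(1:ℝ), FK κ q σ n t := by
      simpa [sub_eq_neg_add] using intervalIntegral.integral_comp_add_right (a := -κ) (b := 0)
        (fun t => FK κ q σ n t) 1
    rw [← hshift]
    apply intervalIntegral.integral_congr
    intro t ht
    rw [Set.uIcc_of_le (by linarith : -κ ≤ (0:ℝ))] at ht
    obtain ⟨ht1, ht2⟩ := ht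
    show FK κ q σ n (t + 1) = _
    rw [FK_period κ q σ n ⟨by linarith, ht2⟩]
    unfold FK
    rw [if_pos (Or.inl (by rw [abs_of_nonpos ht2]; linarith)), one_mul]
  have hsplit : ∫ t in (-κ)..κ, ((Real.cos (2*π*q*t + σ) : ℝ) : ℂ) * El n t
      = (∫ t in (-κ)..(0:ℝ), ((Real.cos (2*π*q*t + σ) : ℝ) : ℂ) * El n t)
        + ∫ t in (0:ℝ)..κ, ((Real.cos (2*π*q*t + σ) : ℝ) : ℂ) * El n t := by
    rw [intervalIntegral.integral_add_adjacent_intervals] <;>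
      exact Continuous.intervalIntegrable (by
        exact (Complex.continuous_ofReal.comp (Real.continuous_cos.comp (by fun_prop))).mul
          (El_continuous n)) _ _
  calc ∫ t in (0:ℝ)..1, FK κ q σ n t
      = (∫ t in (0:ℝ)..κ, FK κ q σ n t)
        + ((∫ t in κ..(1-κ), FK κ q σ n t) + ∫ t in (1-κ)..1, FK κ q σ n t) := by
        rw [h02, h01]
    _ = (∫ t in (0:ℝ)..κ, ((Real.cos (2*π*q*t + σ) : ℝ) : ℂ) * El n t)
        + (0 + ∫ t in (-κ)..(0:ℝ), ((Real.cos (2*π*q*t + σ) : ℝ) : ℂ) * El n t) := by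
        rw [p1, p2, p3]
    _ = ∫ t in (-κ)..κ, ((Real.cos (2*π*q*t + σ) : ℝ) : ℂ) * El n t := by
        rw [zero_add, add_comm, hsplit]
    _ = cC κ q σ n := integral_cosE κ q σ n
  
end NNaux
end part2

section part3
namespace NNaux
variable (κ : ℝ) (q : ℕ) (σ : ℝ)

lemma El_comb (n : ℤ) (x y : ℝ) : El (-n) (y - x) * El n y = El n x := by
  unfold El
  rw [← Complex.exp_add]
  congr 1
  push_cast; ring

lemma Wnn_coe (x y : ℝ) :
    ((Wnn κ x y : ℝ) : ℂ) = (if |y - x| ≤ κ ∨ 1 - κ ≤ |y - x| then (1:ℂ) else 0) := by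
  unfold Wnn
  rw [apply_ite ((↑·) : ℝ → ℂ)]
  simp only [Complex.ofReal_one, Complex.ofReal_zero]
  exact if_congr (by rw [abs_sub_comm, ge_iff_le]) rfl rfl

lemma key_pointwise (n : ℤ) (x y : ℝ) :
    ((Wnn κ x y : ℝ) : ℂ) * ((Real.cos (2*π*q*(y-x) + σ) : ℝ) : ℂ) * El n x
      = FK κ q σ (-n) (y - x) * El n y := by
  rw [Wnn_coe]
  unfold FK
  rw [← El_comb n x y]
  ring

lemma key_pointwise0 (x y : ℝ) :
    ((Wnn κ x y : ℝ) : ℂ) * ((Real.cos (2*π*q*(y-x) + σ) : ℝ) : ℂ)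
      = FK κ q σ 0 (y - x) := by
  have := key_pointwise κ q σ 0 x y
  rw [El_zero, El_zero, mul_one, mul_one, neg_zero] at this
  exact this

lemma setIntegral_Icc_eq_intervalIntegral (f : ℝ → ℂ) :
    ∫ x in Set.Icc (0:ℝ) 1, f x = ∫ x in (0:ℝ)..1, f x := by
  rw [integral_Icc_eq_integral_Ioc, intervalIntegral.integral_of_le zero_le_one]

/-- inner integral over `x` against `El n` -/
lemma inner_x (n : ℤ) (hκ0 : 0 < κ) (hκ2 : κ ≤ 1/2) {y : ℝ} (hy : y ∈ Set.Icc (0:ℝ) 1) :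
    ∫ x in Set.Icc (0:ℝ) 1,
        ((Wnn κ x y : ℝ) : ℂ) * ((Real.cos (2*π*q*(y-x) + σ) : ℝ) : ℂ) * El n x
      = cC κ q σ (-n) * El n y := by
  rw [setIntegral_Icc_eq_intervalIntegral]
  have h1 : ∫ x in (0:ℝ)..1,
      ((Wnn κ x y : ℝ) : ℂ) * ((Real.cos (2*π*q*(y-x) + σ) : ℝ) : ℂ) * El n x
      = ∫ x in (0:ℝ)..1, (fun t => FK κ q σ (-n) t * El n y) (y - x) := by
    apply intervalIntegral.integral_congr
    intro x _
    exact key_pointwise κ q σ n x y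
  rw [h1, intervalIntegral.integral_comp_sub_left (fun t => FK κ q σ (-n) t * El n y) y,
    intervalIntegral.integral_mul_const, sub_zero,
    integral_FK_shift κ q σ (-n) hy, integral_FK κ q σ (-n) hκ0 hκ2]

/-- inner integral over `y` (the constant term) -/
lemma inner_y (hκ0 : 0 < κ) (hκ2 : κ ≤ 1/2) {x : ℝ} (hx : x ∈ Set.Icc (0:ℝ) 1) :
    ∫ y in Set.Icc (0:ℝ) 1,
        ((Wnn κ x y : ℝ) : ℂ) * ((Real.cos (2*π*q*(y-x) + σ) : ℝ) : ℂ)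
      = cC κ q σ 0 := by
  rw [setIntegral_Icc_eq_intervalIntegral]
  have h1 : ∫ y in (0:ℝ)..1,
      ((Wnn κ x y : ℝ) : ℂ) * ((Real.cos (2*π*q*(y-x) + σ) : ℝ) : ℂ)
      = ∫ y in (0:ℝ)..1, (fun t => FK κ q σ 0 t) (y - x) := by
    apply intervalIntegral.integral_congr
    intro y _
    exact key_pointwise0 κ q σ x y
  rw [h1, intervalIntegral.integral_comp_sub_right (fun t => FK κ q σ 0 t) x]
  have hx' : (1 : ℝ) - x ∈ Set.Icc (0:ℝ) 1 := ⟨by linarith [hx.2], by linarith [hx.1]⟩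
  have := integral_FK_shift κ q σ 0 hx'
  rw [show (1:ℝ) - x - 1 = 0 - x by ring] at this
  rw [show (1:ℝ) - x = 1 - x by rfl] at this
  rw [this, integral_FK κ q σ 0 hκ0 hκ2]

end NNaux
end part3





section part4
namespace NNaux
variable (κ : ℝ) (σ : ℝ)

lemma cS_zero : cS κ 0 = 2*κ := by simp [cS]

lemma cS_vals (l q : ℕ) (hl : 0 < l) (hq : 0 < q) :
    cS κ ((l:ℤ) + q) = Real.sin (2*π*((l:ℝ)+q)*κ) / (π*((l:ℝ)+q)) ∧
    ((l ≠ q) → cS κ ((l:ℤ) - q) = Real.sin (2*π*((l:ℝ)-q)*κ) / (π*((l:ℝ)-q))) := by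
  have hlq : ((l:ℤ) + q) ≠ 0 := by positivity
  constructor
  · rw [cS, if_neg hlq, show ((((l:ℤ)+q : ℤ)):ℝ) = (l:ℝ)+q by push_cast; ring]
  · intro h
    have hne : ((l:ℤ) - q) ≠ 0 := by intro hcon; apply h; omega
    rw [cS, if_neg hne, show ((((l:ℤ)-q : ℤ)):ℝ) = (l:ℝ)-q by push_cast; ring]

lemma chi1_eq (l q : ℕ) (hl : 0 < l) (hq : 0 < q) :
    chi1 κ l q = (cS κ ((l:ℤ) + q) + cS κ ((l:ℤ) - q)) / 2 - cS κ q := by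
  have hπ := Real.pi_ne_zero
  have hq' : ((q:ℝ)) ≠ 0 := Nat.cast_ne_zero.2 hq.ne'
  have hl' : ((l:ℝ)) ≠ 0 := Nat.cast_ne_zero.2 hl.ne'
  have hcSq : cS κ (q:ℤ) = Real.sin (2*π*q*κ) / (π*q) := by
    rw [cS, if_neg (by exact_mod_cast hq.ne')]
    norm_num
  obtain ⟨c4, c3⟩ := cS_vals κ l q hl hq
  rcases eq_or_ne l q with h | h
  · subst h
    have c0 : cS κ ((l:ℤ) - l) = 2*κ := by rw [show ((l:ℤ) - l) = 0 by ring, cS_zero]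
    rw [chi1, if_pos rfl, c4, c0, hcSq,
      show 2*π*((l:ℝ)+l)*κ = 4*π*(l:ℝ)*κ by ring, show π*((l:ℝ)+l) = 2*(π*(l:ℝ)) by ring]
    field_simp
    ring
  · have hne : ((l:ℝ) - q) ≠ 0 := by
      have : ((l:ℤ) - q) ≠ 0 := by intro hcon; apply h; omega
      intro hcon; apply this; exact_mod_cast hcon
    have hpl : ((l:ℝ) + q) ≠ 0 := by positivity
    rw [chi1, if_neg h, c4, c3 h, hcSq]
    field_simp
    ring

lemma chi2_eq (l q : ℕ) (hl : 0 < l) (hq : 0 < q) :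
    chi2 κ l q = (cS κ ((l:ℤ) - q) - cS κ ((l:ℤ) + q)) / 2 := by
  have hπ := Real.pi_ne_zero
  have hl' : ((l:ℝ)) ≠ 0 := Nat.cast_ne_zero.2 hl.ne'
  obtain ⟨c4, c3⟩ := cS_vals κ l q hl hq
  rcases eq_or_ne l q with h | h
  · subst h
    have c0 : cS κ ((l:ℤ) - l) = 2*κ := by rw [show ((l:ℤ) - l) = 0 by ring, cS_zero]
    rw [chi2, if_pos rfl, c4, c0,
      show 2*π*((l:ℝ)+l)*κ = 4*π*(l:ℝ)*κ by ring, show π*((l:ℝ)+l) = 2*(π*(l:ℝ)) by ring]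
    field_simp
    ring
  · have hne : ((l:ℝ) - q) ≠ 0 := by
      have : ((l:ℤ) - q) ≠ 0 := by intro hcon; apply h; omega
      intro hcon; apply this; exact_mod_cast hcon
    have hpl : ((l:ℝ) + q) ≠ 0 := by positivity
    rw [chi2, if_neg h, c4, c3 h]
    field_simp

lemma exp_sigma (σ : ℝ) :
    Complex.exp ((σ:ℂ) * Complex.I)
      = ((Real.cos σ : ℝ) : ℂ) + ((Real.sin σ : ℝ) : ℂ) * Complex.I := by
  rw [Complex.exp_mul_I]
  push_cast
  ring

lemma exp_neg_sigma (σ : ℝ) :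
    Complex.exp (-(σ:ℂ) * Complex.I)
      = ((Real.cos σ : ℝ) : ℂ) - ((Real.sin σ : ℝ) : ℂ) * Complex.I := by
  rw [Complex.exp_mul_I]
  push_cast
  rw [Complex.cos_neg, Complex.sin_neg]
  ring

lemma cC_zero (q : ℕ) : cC κ q σ 0 = ((Real.cos σ : ℝ) : ℂ) * ((cS κ q : ℝ) : ℂ) := by
  rw [cC, zero_add, zero_sub, cS_neg, exp_sigma, exp_neg_sigma]
  ring

lemma cC_diff_pos (q l : ℕ) (hl : 0 < l) (hq : 0 < q) :
    cC κ q σ (l:ℤ) - cC κ q σ 0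
      = ((chi1 κ l q * Real.cos σ : ℝ) : ℂ)
          - Complex.I * ((chi2 κ l q * Real.sin σ : ℝ) : ℂ) := by
  rw [cC, cC_zero, exp_sigma, exp_neg_sigma, chi1_eq κ l q hl hq, chi2_eq κ l q hl hq]
  push_cast
  ring

lemma cC_diff_neg (q l : ℕ) (hl : 0 < l) (hq : 0 < q) :
    cC κ q σ (-(l:ℤ)) - cC κ q σ 0
      = ((chi1 κ l q * Real.cos σ : ℝ) : ℂ)
          + Complex.I * ((chi2 κ l q * Real.sin σ : ℝ) : ℂ) := by
  rw [cC, cC_zero, exp_sigma, exp_neg_sigma, chi1_eq κ l q hl hq, chi2_eq κ l q hl hq,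
    show (-(l:ℤ) + q) = -((l:ℤ) - q) by ring, show (-(l:ℤ) - q) = -((l:ℤ) + q) by ring,
    cS_neg, cS_neg]
  push_cast
  ring

end NNaux
end part4

section part5
namespace NNaux

instance : IsFiniteMeasure muI := by
  constructor
  rw [muI, Measure.restrict_apply_univ, Real.volume_Icc]
  norm_num

lemma exists_coeff_ne_zero (f : ℝ → ℂ) (hf2 : MemLp f 2 muI)
    (h0 : ¬ f =ᵐ[muI] 0) :
    ∃ n : ℤ, ∫ x in Set.Icc (0:ℝ) 1, f x * El n x ≠ 0 := by
  haveI : Fact ((0:ℝ) < 1) := ⟨zero_lt_one⟩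
  by_contra hcon
  push_neg at hcon
  apply h0
  -- measurable representative
  set g := hf2.aestronglyMeasurable.mk f with hgdef
  have hgsm : StronglyMeasurable g := hf2.aestronglyMeasurable.stronglyMeasurable_mk
  have hae : f =ᵐ[muI] g := hf2.aestronglyMeasurable.ae_eq_mk
  have hg2 : MemLp g 2 muI := hf2.ae_eq hae
  have hIocIcc : volume.restrict (Set.Ioc (0:ℝ) 1) = muI := by
    rw [muI]
    exact Measure.restrict_congr_set Ioc_ae_eq_Icc
  have hcong : ∀ n : ℤ, ∫ x in Set.Icc (0:ℝ) 1, g x * El n x = 0 := by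
    intro n
    rw [← hcon n]
    apply integral_congr_ae
    filter_upwards [hae] with x hx
    rw [hx]
  -- lift to the circle
  set ψ : AddCircle (1:ℝ) → ℂ := AddCircle.liftIoc 1 0 g with hψdef
  have hψm : StronglyMeasurable ψ := by
    apply hgsm.comp_measurable
    exact measurable_subtype_coe.comp (AddCircle.measurableEquivIoc 1 0).measurable
  have hmp := AddCircle.measurePreserving_mk (1:ℝ) 0
  have hψmk : ∀ x ∈ Set.Ioc (0:ℝ) (0+1), ψ ((x : ℝ) : AddCircle (1:ℝ)) = g x := by
    intro x hx
    exact AddCircle.liftIoc_coe_apply hx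
  have hvol : (volume : Measure (AddCircle (1:ℝ))) = AddCircle.haarAddCircle := by
    rw [AddCircle.volume_eq_smul_haarAddCircle]
    simp
  have hψcomp : (fun x : ℝ => ψ ((x : ℝ) : AddCircle (1:ℝ)))
      =ᵐ[volume.restrict (Set.Ioc (0:ℝ) (0+1))] g := by
    filter_upwards [ae_restrict_mem measurableSet_Ioc] with x hx
    exact hψmk x hx
  have h01 : Set.Ioc (0:ℝ) (0+1) = Set.Ioc (0:ℝ) 1 := by norm_num
  have hψ2 : MemLp ψ 2 (AddCircle.haarAddCircle : Measure (AddCircle (1:ℝ))) := by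
    refine ⟨hψm.aestronglyMeasurable, ?_⟩
    have := eLpNorm_comp_measurePreserving (g := ψ) (p := 2) hψm.aestronglyMeasurable hmp
    rw [hvol] at this
    rw [← this]
    calc eLpNorm (ψ ∘ (fun x : ℝ => ((x : ℝ) : AddCircle (1:ℝ)))) 2
          (volume.restrict (Set.Ioc (0:ℝ) (0+1)))
        = eLpNorm g 2 (volume.restrict (Set.Ioc (0:ℝ) (0+1))) := eLpNorm_congr_ae hψcomp
      _ = eLpNorm g 2 muI := by rw [h01, hIocIcc]
      _ < ⊤ := hg2.2
  -- Fourier coefficients vanish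
  have hcoeff : ∀ n : ℤ, fourierCoeff ψ n = 0 := by
    intro n
    rw [fourierCoeff_eq_intervalIntegral ψ n 0]
    have hpt : ∀ x ∈ Set.Ioc (0:ℝ) 1,
        (fourier (-n) ((x : ℝ) : AddCircle (1:ℝ))) • ψ ((x : ℝ) : AddCircle (1:ℝ))
          = g x * El (-n) x := by
      intro x hx
      rw [hψmk x (by simpa using hx), smul_eq_mul, mul_comm]
      congr 1
      rw [fourier_coe_apply, El]
      push_cast
      ring_nf
    have hint : ∫ x in (0:ℝ)..(0+1),
        (fourier (-n) ((x : ℝ) : AddCircle (1:ℝ))) • ψ ((x : ℝ) : AddCircle (1:ℝ)) = 0 := by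
      have hcg : ∫ x in (0:ℝ)..(0+1),
          (fourier (-n) ((x : ℝ) : AddCircle (1:ℝ))) • ψ ((x : ℝ) : AddCircle (1:ℝ))
            = ∫ x in (0:ℝ)..(0+1), g x * El (-n) x := by
        apply intervalIntegral.integral_congr_ae
        apply Eventually.of_forall
        intro x hx
        rw [Set.uIoc_of_le (by norm_num : (0:ℝ) ≤ 0+1)] at hx
        exact hpt x (by simpa using hx)
      rw [hcg, show (0:ℝ)+1 = 1 by norm_num, ← setIntegral_Icc_eq_intervalIntegral,
        hcong (-n)]
    rw [hint, smul_zero]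
  -- conclude ψ = 0 a.e.
  have hψ0 : ψ =ᵐ[(AddCircle.haarAddCircle : Measure (AddCircle (1:ℝ)))] 0 := by
    have hLp : hψ2.toLp ψ = 0 := by
      have hrepr : fourierBasis.repr (hψ2.toLp ψ) = 0 := by
        ext n
        rw [fourierBasis_repr]
        have : fourierCoeff (⇑(hψ2.toLp ψ)) n = fourierCoeff ψ n := by
          apply integral_congr_ae
          filter_upwards [hψ2.coeFn_toLp] with x hx
          rw [hx]
        simp [this, hcoeff n]
      have := fourierBasis.repr.injective (by rw [hrepr, map_zero] :
        fourierBasis.repr (hψ2.toLp ψ) = fourierBasis.repr 0)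
      exact this
    have := (MemLp.toLp_eq_toLp_iff hψ2 (MemLp.zero (p := 2))).mp (by
      rw [hLp, MemLp.toLp_zero])
    exact this
  -- pull back
  have hcomp0 : (fun x : ℝ => ψ ((x : ℝ) : AddCircle (1:ℝ)))
      =ᵐ[volume.restrict (Set.Ioc (0:ℝ) (0+1))] (fun _ => 0) := by
    rw [← hvol] at hψ0
    have := ae_eq_comp (μ := volume.restrict (Set.Ioc (0:ℝ) (0+1)))
      (f := fun x : ℝ => ((x : ℝ) : AddCircle (1:ℝ))) (g := ψ) (g' := fun _ => 0)
      hmp.aemeasurable (by rw [hmp.map_eq]; exact hψ0)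
    simpa [Function.comp_def] using this
  have hg0 : g =ᵐ[muI] 0 := by
    have h2 : g =ᵐ[volume.restrict (Set.Ioc (0:ℝ) (0+1))] (fun _ => 0) :=
      hψcomp.symm.trans hcomp0
    rw [h01, hIocIcc] at h2
    exact h2
  exact hae.trans hg0

end NNaux
end part5



namespace NNaux

lemma muI_def : volume.restrict (Set.Icc (0:ℝ) 1) = muI := rfl

theorem stmt10' (κ : ℝ) (q : ℕ) (σ b₁ : ℝ)
    (hκ : κ ∈ Set.Ioc (0:ℝ) (1/2)) (hq : 0 < q)
    (ev : ℂ) (φ : ℝ → ℂ) (hφ : MemLp φ 2 muI) (hφ0 : ¬ φ =ᵐ[muI] 0)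
    (heig : ∀ᵐ x ∂muI, Lop κ q σ b₁ φ x = ev * φ x) :
    ev = -(b₁:ℂ) ∨ ∃ l : ℕ, 0 < l ∧
      (ev = ((chi1 κ l q * Real.cos σ - b₁ : ℝ) : ℂ)
              - Complex.I * ((chi2 κ l q * Real.sin σ : ℝ) : ℂ) ∨
       ev = ((chi1 κ l q * Real.cos σ - b₁ : ℝ) : ℂ)
              + Complex.I * ((chi2 κ l q * Real.sin σ : ℝ) : ℂ)) := by
  obtain ⟨hκ0, hκ2⟩ := hκ
  have hφi : Integrable φ muI := hφ.integrable one_le_two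
  have hφm : AEStronglyMeasurable φ muI := hφ.aestronglyMeasurable
  set K : ℝ → ℝ → ℂ :=
    fun x y => ((Wnn κ x y : ℝ) : ℂ) * ((Real.cos (2*π*q*(y-x) + σ) : ℝ) : ℂ) with hKdef
  have hKb : ∀ x y, ‖K x y‖ ≤ 1 := by
    intro x y
    rw [hKdef]
    have h1 : ‖((Wnn κ x y : ℝ) : ℂ)‖ ≤ 1 := by
      rw [Complex.norm_real, Real.norm_eq_abs, Wnn]
      split <;> simp
    have h2 : ‖((Real.cos (2*π*q*(y-x) + σ) : ℝ) : ℂ)‖ ≤ 1 := by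
      rw [Complex.norm_real, Real.norm_eq_abs]
      exact Real.abs_cos_le_one _
    calc ‖((Wnn κ x y : ℝ) : ℂ) * ((Real.cos (2*π*q*(y-x) + σ) : ℝ) : ℂ)‖
        = ‖((Wnn κ x y : ℝ) : ℂ)‖ * ‖((Real.cos (2*π*q*(y-x) + σ) : ℝ) : ℂ)‖ := norm_mul _ _
      _ ≤ 1 * 1 := mul_le_mul h1 h2 (norm_nonneg _) zero_le_one
      _ = 1 := by norm_num
  have hKm : Measurable (fun z : ℝ × ℝ => K z.1 z.2) := by
    rw [hKdef]
    apply Measurable.mul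
    · apply Complex.measurable_ofReal.comp
      unfold Wnn
      apply Measurable.ite _ measurable_const measurable_const
      exact ((measurableSet_le (continuous_abs.comp
          (continuous_fst.sub continuous_snd)).measurable measurable_const).union
        (measurableSet_le measurable_const (continuous_abs.comp
          (continuous_fst.sub continuous_snd)).measurable))
    · apply Complex.measurable_ofReal.comp
      exact (Real.continuous_cos.comp (by fun_prop)).measurable
  have hKm1 : ∀ x, Measurable (fun y => K x y) :=
    fun x => hKm.comp (measurable_prodMk_left)
  set c0 : ℂ := cC κ q σ 0 with hc0def
  set α : ℂ := ev + c0 + (b₁:ℂ) with hαdef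
  -- pointwise a.e. identity
  have hconv : ∀ᵐ x ∂muI, (∫ y, K x y * φ y ∂muI) = α * φ x := by
    filter_upwards [heig, ae_restrict_mem measurableSet_Icc] with x hx hxI
    have h1 : Integrable (fun y => K x y * φ y) muI := by
      refine Integrable.mono' hφi.norm
        (((hKm1 x).aestronglyMeasurable).mul hφm) ?_
      filter_upwards with y
      rw [norm_mul]
      exact mul_le_of_le_one_left (norm_nonneg _) (hKb x y)
    have h2 : Integrable (fun y => K x y * φ x) muI := by
      refine Integrable.mono' (integrable_const ‖φ x‖)
        (((hKm1 x).aestronglyMeasurable).mul aestronglyMeasurable_const) ?_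
      filter_upwards with y
      rw [norm_mul]
      exact mul_le_of_le_one_left (norm_nonneg _) (hKb x y)
    have hsub : (∫ y, K x y * (φ y - φ x) ∂muI)
        = (∫ y, K x y * φ y ∂muI) - ∫ y, K x y * φ x ∂muI := by
      have : (fun y => K x y * (φ y - φ x))
          = fun y => K x y * φ y - K x y * φ x := by
        funext y; ring
      rw [this]
      exact integral_sub h1 h2
    have hKint : (∫ y, K x y ∂muI) = c0 := by
      rw [← muI_def]
      exact inner_y κ q σ hκ0 hκ2 hxI
    have hKxint : (∫ y, K x y * φ x ∂muI) = c0 * φ x := by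
      rw [integral_mul_const, hKint]
    have hLop : Lop κ q σ b₁ φ x
        = (∫ y, K x y * φ y ∂muI) - c0 * φ x - (b₁:ℂ) * φ x := by
      rw [Lop, muI_def, hsub, hKxint]
    rw [hLop] at hx
    rw [hαdef]
    linear_combination hx
  -- Fourier-type coefficients
  set Phat : ℤ → ℂ := fun n => ∫ x, φ x * El n x ∂muI with hPdef
  have key : ∀ n : ℤ, (cC κ q σ (-n) - α) * Phat n = 0 := by
    intro n
    have hH : Integrable (Function.uncurry fun x y => (K x y * El n x) * φ y)
        (muI.prod muI) := by
      have hm : AEStronglyMeasurable (Function.uncurry fun x y => (K x y * El n x) * φ y)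
          (muI.prod muI) := by
        have h1 : Measurable fun z : ℝ × ℝ => K z.1 z.2 * El n z.1 :=
          hKm.mul ((El_continuous n).measurable.comp measurable_fst)
        exact (h1.aestronglyMeasurable).mul hφm.comp_snd
      refine Integrable.mono' ((integrable_const (1:ℝ)).mul_prod hφi.norm) hm ?_
      filter_upwards with z
      show ‖(K z.1 z.2 * El n z.1) * φ z.2‖ ≤ (1:ℝ) * ‖φ z.2‖
      rw [norm_mul, norm_mul, El_norm, mul_one, one_mul]
      exact mul_le_of_le_one_left (norm_nonneg _) (hKb _ _)
    have hLHS1 : (∫ x, (∫ y, K x y * φ y ∂muI) * El n x ∂muI) = cC κ q σ (-n) * Phat n := by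
      calc (∫ x, (∫ y, K x y * φ y ∂muI) * El n x ∂muI)
          = ∫ x, (∫ y, (K x y * El n x) * φ y ∂muI) ∂muI := by
            refine integral_congr_ae (Eventually.of_forall fun x => ?_)
            show (∫ y, K x y * φ y ∂muI) * El n x = ∫ y, (K x y * El n x) * φ y ∂muI
            rw [← integral_mul_const]
            refine integral_congr_ae (Eventually.of_forall fun y => ?_)
            show (K x y * φ y) * El n x = (K x y * El n x) * φ y
            ring
        _ = ∫ y, (∫ x, (K x y * El n x) * φ y ∂muI) ∂muI := integral_integral_swap hH
        _ = ∫ y, (cC κ q σ (-n) * El n y) * φ y ∂muI := by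
            refine integral_congr_ae ?_
            filter_upwards [ae_restrict_mem measurableSet_Icc] with y hy
            show (∫ x, (K x y * El n x) * φ y ∂muI) = (cC κ q σ (-n) * El n y) * φ y
            rw [integral_mul_const]
            congr 1
            have := inner_x κ q σ n hκ0 hκ2 hy
            rw [muI_def] at this
            exact this
        _ = cC κ q σ (-n) * Phat n := by
            show _ = cC κ q σ (-n) * ∫ y, φ y * El n y ∂muI
            rw [← integral_const_mul]
            refine integral_congr_ae (Eventually.of_forall fun y => ?_)
            show (cC κ q σ (-n) * El n y) * φ y = cC κ q σ (-n) * (φ y * El n y)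
            ring
    have hLHS2 : (∫ x, (∫ y, K x y * φ y ∂muI) * El n x ∂muI) = α * Phat n := by
      have : (∫ x, (∫ y, K x y * φ y ∂muI) * El n x ∂muI)
          = ∫ x, α * (φ x * El n x) ∂muI := by
        refine integral_congr_ae ?_
        filter_upwards [hconv] with x hx
        show (∫ y, K x y * φ y ∂muI) * El n x = α * (φ x * El n x)
        rw [hx]; ring
      rw [this, integral_const_mul]
    rw [sub_mul, hLHS1.symm.trans hLHS2]
    ring
  -- pick a nonzero coefficient
  obtain ⟨n, hn⟩ := exists_coeff_ne_zero φ hφ hφ0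
  have hn' : Phat n ≠ 0 := by
    rw [hPdef, ← muI_def] at *
    exact hn
  have hα : cC κ q σ (-n) = α := by
    rcases mul_eq_zero.mp (key n) with h | h
    · linear_combination h
    · exact absurd h hn'
  have hev : ev = cC κ q σ (-n) - c0 - (b₁:ℂ) := by
    rw [hα, hαdef]; ring
  rcases lt_trichotomy n 0 with hlt | heq | hgt
  · -- -n > 0
    right
    set l : ℕ := (-n).toNat with hldef
    have hl : 0 < l := by omega
    have hlz : ((l:ℤ)) = -n := by omega
    refine ⟨l, hl, Or.inl ?_⟩
    rw [hev, show (-n) = (l:ℤ) from hlz.symm]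
    have := cC_diff_pos κ σ q l hl hq
    rw [hc0def]
    push_cast [Complex.ofReal_sub] at this ⊢
    linear_combination this
  · -- n = 0
    left
    rw [hev, heq, neg_zero, hc0def]
    ring
  · right
    set l : ℕ := n.toNat with hldef
    have hl : 0 < l := by omega
    have hlz : ((l:ℤ)) = n := by omega
    refine ⟨l, hl, Or.inr ?_⟩
    rw [hev, show (-n) = -(l:ℤ) by omega]
    have := cC_diff_neg κ σ q l hl hq
    rw [hc0def]
    push_cast [Complex.ofReal_sub] at this ⊢
    linear_combination this

end NNaux

/-- Every eigenvalue of `ℒ` is `−b₁` or of the form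
`χ₁(κ;ℓ,q) cos σ − b₁ ∓ i χ₂(κ;ℓ,q) sin σ` for some positive integer `ℓ`. -/
theorem stmt10 (κ : ℝ) (q : ℕ) (σ b₁ : ℝ)
    (hκ : κ ∈ Set.Ioc (0:ℝ) (1/2)) (hq : 0 < q)
    (hσ : σ ∈ Set.Ioo (-(π/2)) (π/2))
    (ev : ℂ) (φ : ℝ → ℂ) (hφ : MemLp φ 2 muI) (hφ0 : ¬ φ =ᵐ[muI] 0)
    (heig : ∀ᵐ x ∂muI, Lop κ q σ b₁ φ x = ev * φ x) :
    ev = -(b₁:ℂ) ∨ ∃ l : ℕ, 0 < l ∧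
      (ev = ((chi1 κ l q * Real.cos σ - b₁ : ℝ) : ℂ)
              - Complex.I * ((chi2 κ l q * Real.sin σ : ℝ) : ℂ) ∨
       ev = ((chi1 κ l q * Real.cos σ - b₁ : ℝ) : ℂ)
              + Complex.I * ((chi2 κ l q * Real.sin σ : ℝ) : ℂ)) := by
  exact NNaux.stmt10' κ q σ b₁ hκ hq ev φ hφ hφ0 heig
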